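/- Let k be an integer with 1 ≤ k < n(q-1). Then the evaluation vector of the monomial x_0^k on P' lies in the dual code (C_{n,k}^q)^⊥, i.e., for every monomial m = x_0^{b_0}x_1^{b_1}⋯x_n^{b_n} of degree k, the sum over p ∈ P' of (x_0^k · m)(p) equals 0 in 𝔽_q. -/

import Mathlib

open scoped BigOperators

/-- A vector in `F^(n+1)` is a standard representative if its leftmost nonzero
coordinate equals `1`. -/
def IsStdRep {F : Type*} [Field F] {n : ℕ} (v : Fin (n + 1) → F) : Prop :=
  ∃ i, (∀ j, j < i → v j = 0) ∧ v i = 1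

/-- The set of standard affine representatives of the points of projective n-space. -/
abbrev ProjPts (F : Type*) [Field F] (n : ℕ) : Type _ :=
  {v : Fin (n + 1) → F // IsStdRep v}

noncomputable instance {F : Type*} [Field F] [Fintype F] {n : ℕ} :
    Fintype (ProjPts F n) := Fintype.ofFinite _

/-- Evaluation of a polynomial at the standard representatives, as a linear map. -/
noncomputable def evalOnPts (F : Type*) [Field F] [Fintype F] (n : ℕ) :
    MvPolynomial (Fin (n + 1)) F →ₗ[F] (ProjPts F n → F) where
  toFun f := fun p => MvPolynomial.eval p.1 f
  map_add' f g := by ext p; simp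
  map_smul' c f := by ext p; simp [MvPolynomial.smul_eval]

/-- The projective Reed–Muller code `C_{n,k}^q`: evaluations of homogeneous degree-`k`
polynomials at the standard representatives of the points of `ℙ^n(F)`. -/
noncomputable def PRM (F : Type*) [Field F] [Fintype F] (n k : ℕ) :
    Submodule F (ProjPts F n → F) :=
  Submodule.map (evalOnPts F n) (MvPolynomial.homogeneousSubmodule (Fin (n + 1)) F k)

/-- The dual code with respect to the standard bilinear form. -/
noncomputable def dualCode {F : Type*} [Field F] [Fintype F] {n : ℕ}
    (C : Submodule F (ProjPts F n → F)) : Submodule F (ProjPts F n → F) where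
  carrier := {y | ∀ c ∈ C, ∑ p : ProjPts F n, y p * c p = 0}
  zero_mem' := by intro c hc; simp
  add_mem' := by
    intro a b ha hb c hc
    show ∑ p : ProjPts F n, (a + b) p * c p = 0
    simp only [Pi.add_apply, add_mul, Finset.sum_add_distrib, ha c hc, hb c hc, add_zero]
  smul_mem' := by
    intro r a ha c hc
    show ∑ p : ProjPts F n, (r • a) p * c p = 0
    simp only [Pi.smul_apply, smul_eq_mul, mul_assoc, ← Finset.mul_sum, ha c hc, mul_zero]


open Finset in
lemma sumpow' {F : Type*} [Field F] [Fintype F] [DecidableEq F] (m : ℕ)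
    (h : m = 0 ∨ ¬ (Fintype.card F - 1 ∣ m)) : ∑ t : F, t ^ m = 0 := by
  rcases h with h | h
  · simp only [h, pow_zero, sum_const, card_univ, nsmul_eq_mul, mul_one,
      Nat.cast_card_eq_zero F]
  · have hm : m ≠ 0 := by rintro rfl; exact h (dvd_zero _)
    let φ : Fˣ ↪ F := ⟨fun x ↦ x, fun _ _ => Units.ext⟩
    have huniv : univ.map φ = univ \ {0} := by
      ext x
      simp only [mem_map, mem_univ, Function.Embedding.coeFn_mk, true_and, mem_sdiff,
        mem_singleton, φ]; exact isUnit_iff_ne_zero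
    calc
      ∑ x : F, x ^ m = ∑ x ∈ univ \ {(0 : F)}, x ^ m := by
        rw [← sum_sdiff ({0} : Finset F).subset_univ, sum_singleton, zero_pow hm, add_zero]
      _ = ∑ x : Fˣ, (x ^ m : F) := by simp [φ, ← huniv, univ.sum_map φ]; rfl
      _ = 0 := by rw [FiniteField.sum_pow_units F m, if_neg h]

lemma std_zero_or_one' {F : Type*} [Field F] {n : ℕ} (p : ProjPts F n) :
    p.1 0 = 0 ∨ p.1 0 = 1 := by
  obtain ⟨i, hlt, hi⟩ := p.2
  rcases eq_or_ne i 0 with rfl | h0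
  · exact Or.inr hi
  · exact Or.inl (hlt 0 (Fin.pos_of_ne_zero h0))

open Finset in
lemma monsum' {F : Type*} [Field F] [Fintype F] [DecidableEq F] {n : ℕ}
    (a : Fin (n + 1) → ℕ) (ha0 : a 0 ≠ 0)
    (hj : ∃ j : Fin n, a j.succ = 0 ∨ ¬ (Fintype.card F - 1 ∣ a j.succ)) :
    ∑ p : ProjPts F n, ∏ j, p.1 j ^ a j = 0 := by
  classical
  have step1 : ∑ p : ProjPts F n, ∏ j, p.1 j ^ a j
      = ∑ p ∈ univ.filter (fun p : ProjPts F n => p.1 0 = 1), ∏ j, p.1 j ^ a j := by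
    rw [sum_filter_of_ne]
    intro p _ hne
    rcases std_zero_or_one' p with h | h
    · exact absurd (Finset.prod_eq_zero (mem_univ 0) (by rw [h, zero_pow ha0])) hne
    · exact h
  have step2 : ∑ p ∈ univ.filter (fun p : ProjPts F n => p.1 0 = 1), ∏ j, p.1 j ^ a j
      = ∑ w : Fin n → F, ∏ j : Fin n, w j ^ a j.succ := by
    apply Finset.sum_nbij' (fun p => Fin.tail p.1)
      (fun w => (⟨Fin.cons 1 w, 0, fun j hj => absurd hj (Nat.not_lt_zero _), rfl⟩ : ProjPts F n))
    · intro p _; exact mem_univ _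
    · intro w _; simp
    · intro p hp
      simp only [mem_filter] at hp
      have h := Fin.cons_self_tail p.1
      rw [hp.2] at h
      exact Subtype.ext h
    · intro w _; simp
    · intro p hp
      simp only [mem_filter] at hp
      rw [Fin.prod_univ_succ]
      rw [hp.2, one_pow, one_mul]
      exact Finset.prod_congr rfl fun j _ => rfl
  obtain ⟨j, hjz⟩ := hj
  have step3 : ∑ w : Fin n → F, ∏ j : Fin n, w j ^ a j.succ
      = ∏ j : Fin n, ∑ t : F, t ^ a j.succ := by
    rw [Finset.prod_univ_sum]
    rw [Fintype.piFinset_univ]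
  rw [step1, step2, step3]
  exact Finset.prod_eq_zero (mem_univ j) (sumpow' _ hjz)

theorem stmt13 (q n : ℕ) (F : Type*) [Field F] [Fintype F] [DecidableEq F]
    (hq : Fintype.card F = q) (hn : 1 ≤ n) (k : ℕ) (hk1 : 1 ≤ k) (hk2 : k < n * (q - 1)) :
    (fun p : ProjPts F n => p.1 0 ^ k) ∈ dualCode (PRM F n k) := by
  subst hq
  intro c hc
  obtain ⟨f, hf, rfl⟩ := hc
  replace hf : MvPolynomial.IsHomogeneous f k := hf
  show ∑ p : ProjPts F n, p.1 0 ^ k * MvPolynomial.eval p.1 f = 0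
  simp_rw [MvPolynomial.eval_eq, Finset.mul_sum]
  rw [Finset.sum_comm]
  apply Finset.sum_eq_zero
  intro d hd
  have hdeg : ∑ j, d j = k := by
    have h1 := hf (MvPolynomial.mem_support_iff.mp hd)
    rw [← h1, Finsupp.weight_apply, Finsupp.sum]
    rw [Finset.sum_subset (Finset.subset_univ d.support)]
    · simp [mul_comm]
    · intro x _ hx
      simp [Finsupp.notMem_support_iff.mp hx]
  set a : Fin (n+1) → ℕ := fun j => d j + if j = 0 then k else 0 with ha
  have key : ∀ p : ProjPts F n,
      p.1 0 ^ k * (MvPolynomial.coeff d f * ∏ j, p.1 j ^ d j)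
        = MvPolynomial.coeff d f * ∏ j, p.1 j ^ a j := by
    intro p
    have : ∏ j, p.1 j ^ a j = (∏ j, p.1 j ^ d j) * p.1 0 ^ k := by
      simp only [ha, pow_add, Finset.prod_mul_distrib]
      congr 1
      rw [Fin.prod_univ_succ]
      simp [Fin.succ_ne_zero]
    rw [this]; ring
  have hprod : ∀ x : Fin (n+1) → F, ∏ i ∈ d.support, x i ^ d i = ∏ j, x j ^ d j := by
    intro x
    apply Finset.prod_subset (Finset.subset_univ d.support)
    intro j _ hj
    simp [Finsupp.notMem_support_iff.mp hj]
  have goal0 : ∑ p : ProjPts F n,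
      p.1 0 ^ k * (MvPolynomial.coeff d f * ∏ i ∈ d.support, p.1 i ^ d i)
        = MvPolynomial.coeff d f * ∑ p : ProjPts F n, ∏ j, p.1 j ^ a j := by
    rw [Finset.mul_sum]
    refine Finset.sum_congr rfl fun p _ => ?_
    rw [hprod p.1]
    exact key p
  rw [goal0, monsum' a, mul_zero]
  · have h0 : a 0 = d 0 + k := by simp [ha]
    omega
  · by_contra hcon
    push_neg at hcon
    have hge : ∀ j : Fin n, Fintype.card F - 1 ≤ d j.succ := by
      intro j
      obtain ⟨h1, h2⟩ := hcon j
      have hne : d j.succ ≠ 0 := by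
        simpa [ha, Fin.succ_ne_zero] using h1
      rw [ha] at h2
      simp only [Fin.succ_ne_zero, if_false, add_zero] at h2
      exact Nat.le_of_dvd (Nat.pos_of_ne_zero hne) h2
    have hsum : n * (Fintype.card F - 1) ≤ ∑ j : Fin n, d j.succ := by
      calc n * (Fintype.card F - 1) = ∑ _j : Fin n, (Fintype.card F - 1) := by simp [mul_comm]
        _ ≤ ∑ j : Fin n, d j.succ := Finset.sum_le_sum fun j _ => hge j
    have : ∑ j, d j = d 0 + ∑ j : Fin n, d j.succ := Fin.sum_univ_succ d
    omega
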